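/- Constancy of the competitive-ratio functional: let g > 0 and define f(x) := e^{x/g} / (g(e−1)) for x ∈ [0, g]. Then for every z ∈ (0, g], (1/z)·∫_0^z (x + g)·f(x) dx + 1 − ∫_0^z f(x) dx = e/(e−1). -/

import Mathlib

lemma exp_div_antideriv (g : ℝ) (hg : g ≠ 0) (x : ℝ) :
    HasDerivAt (fun t => g * Real.exp (t / g)) (Real.exp (x / g)) x := by
  have h : HasDerivAt (fun t : ℝ => t / g) (1 / g) x := (hasDerivAt_id x).div_const g
  have := (Real.hasDerivAt_exp (x / g)).comp x h
  have h2 := this.const_mul g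
  convert h2 using 1
  case e'_9 => field_simp
  all_goals rfl

lemma xexp_antideriv (g : ℝ) (hg : g ≠ 0) (x : ℝ) :
    HasDerivAt (fun t => g * t * Real.exp (t / g)) ((x + g) * Real.exp (x / g)) x := by
  have h : HasDerivAt (fun t : ℝ => t / g) (1 / g) x := (hasDerivAt_id x).div_const g
  have he := (Real.hasDerivAt_exp (x / g)).comp x h
  have hmul : HasDerivAt (fun t : ℝ => g * t) g x := by
    simpa using (hasDerivAt_id x).const_mul g
  have := hmul.mul he
  convert this using 1
  case e'_9 =>
    simp only [Function.comp_apply]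
    field_simp
    ring
  all_goals rfl

/-- **Constancy of the competitive-ratio functional.** For `g > 0` and the density
`f x = e^{x/g} / (g (e-1))`, one has for every `z ∈ (0, g]`:
`(1/z) ∫_0^z (x+g) f x dx + 1 - ∫_0^z f x dx = e/(e-1)`. -/
theorem competitive_ratio_functional_constant
    (g : ℝ) (hg : 0 < g) (f : ℝ → ℝ)
    (hf : ∀ x : ℝ, f x = Real.exp (x / g) / (g * (Real.exp 1 - 1)))
    (z : ℝ) (hz : z ∈ Set.Ioc 0 g) :
    (1 / z) * (∫ x in (0 : ℝ)..z, (x + g) * f x) + 1 - (∫ x in (0 : ℝ)..z, f x)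
      = Real.exp 1 / (Real.exp 1 - 1) := by
  obtain ⟨hz0, hzg⟩ := hz
  have hg0 : g ≠ 0 := hg.ne'
  have he1 : Real.exp 1 - 1 > 0 := by
    have := Real.exp_one_gt_d9; linarith
  have hc : g * (Real.exp 1 - 1) ≠ 0 := by positivity
  -- integral of exp(x/g)
  have I1 : (∫ x in (0 : ℝ)..z, Real.exp (x / g)) = g * Real.exp (z / g) - g := by
    have := intervalIntegral.integral_eq_sub_of_hasDerivAt
      (a := 0) (b := z) (f := fun t => g * Real.exp (t / g)) (f' := fun t => Real.exp (t / g))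
      (fun x _ => exp_div_antideriv g hg0 x)
      (Continuous.intervalIntegrable (by continuity) _ _)
    simp [this]
  have I2 : (∫ x in (0 : ℝ)..z, (x + g) * Real.exp (x / g)) = g * z * Real.exp (z / g) := by
    have := intervalIntegral.integral_eq_sub_of_hasDerivAt
      (a := 0) (b := z) (f := fun t => g * t * Real.exp (t / g)) (f' := fun t => (t + g) * Real.exp (t / g))
      (fun x _ => xexp_antideriv g hg0 x)
      (Continuous.intervalIntegrable (by continuity) _ _)
    simp [this]
  have e1 : (∫ x in (0 : ℝ)..z, (x + g) * f x)
      = (g * z * Real.exp (z / g)) / (g * (Real.exp 1 - 1)) := by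
    simp only [hf, ← mul_div_assoc]
    rw [intervalIntegral.integral_div, I2]
  have e2 : (∫ x in (0 : ℝ)..z, f x)
      = (g * Real.exp (z / g) - g) / (g * (Real.exp 1 - 1)) := by
    simp only [hf]
    rw [intervalIntegral.integral_div, I1]
  rw [e1, e2]
  field_simp
  ring
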